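/- Let Δ⁻¹, q ≫ L⁻¹ ≫ n⁻¹. Let G be a q-cut-dense graph on n vertices, v ∈ V(G), and U ⊆ V(G) with |U| ≥ L. Then there is a perfect Δ-ary tree of height at most 19·q⁻⁴, rooted at v, embedded in G with all its leaves mapped into U. -/

import Mathlib

def CutDense {V : Type} (G : SimpleGraph V) (q : ℝ) : Prop :=
  ∀ A B : Set V, A ∪ B = Set.univ → Disjoint A B →
    q * (A.ncard : ℝ) * (B.ncard : ℝ) ≤
      (Set.ncard {x : V × V | x.1 ∈ A ∧ x.2 ∈ B ∧ G.Adj x.1 x.2} : ℝ)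

namespace Stmt18

open Finset

variable {V : Type} [Fintype V] [DecidableEq V]

/-- number of neighbours of `x` inside `A`. -/
def degIn (G : SimpleGraph V) [DecidableRel G.Adj] (x : V) (A : Finset V) : ℕ :=
  (A ∩ G.neighborFinset x).card

variable {G : SimpleGraph V} [DecidableRel G.Adj] {q : ℝ}

lemma degIn_mono {A B : Finset V} (h : A ⊆ B) (x : V) : degIn G x A ≤ degIn G x B :=
  card_le_card (inter_subset_inter h (Finset.Subset.refl _))

lemma degIn_le_card (x : V) (A : Finset V) : degIn G x A ≤ A.card :=
  card_le_card (inter_subset_left)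

lemma degIn_union_le (x : V) (A B : Finset V) :
    degIn G x (A ∪ B) ≤ degIn G x A + degIn G x B := by
  unfold degIn
  rw [union_inter_distrib_right]
  exact card_union_le _ _

lemma deg_le_degIn_add_compl (x : V) (A : Finset V) :
    (G.neighborFinset x).card ≤ degIn G x A + Aᶜ.card := by
  have h : G.neighborFinset x ⊆ (A ∩ G.neighborFinset x) ∪ Aᶜ := by
    intro y hy
    by_cases hyA : y ∈ A
    · exact mem_union_left _ (mem_inter.2 ⟨hyA, hy⟩)
    · exact mem_union_right _ (mem_compl.2 hyA)
  exact le_trans (card_le_card h) (card_union_le _ _)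

/-- the number of ordered adjacent pairs `(a, b)` with `a ∈ A`, `b ∈ B`. -/
def ep (G : SimpleGraph V) [DecidableRel G.Adj] (A B : Finset V) : ℕ :=
  ∑ y ∈ B, degIn G y A

lemma ep_le_mul (A B : Finset V) : ep G A B ≤ B.card * A.card := by
  unfold ep
  calc ∑ y ∈ B, degIn G y A ≤ ∑ _y ∈ B, A.card := by
        exact Finset.sum_le_sum (fun y _ => degIn_le_card y A)
    _ = B.card * A.card := by rw [Finset.sum_const, smul_eq_mul]

lemma pairs_set_eq (A B : Finset V) :
    {x : V × V | x.1 ∈ (A : Set V) ∧ x.2 ∈ (B : Set V) ∧ G.Adj x.1 x.2} =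
      ((A ×ˢ B).filter fun p => G.Adj p.1 p.2 : Finset (V × V)) := by
  ext p
  simp only [Set.mem_setOf_eq, Finset.coe_filter, Finset.mem_product, Set.mem_setOf_eq,
    Finset.mem_coe]
  tauto

lemma pairs_card_eq (A B : Finset V) :
    ((A ×ˢ B).filter fun p => G.Adj p.1 p.2).card = ep G A B := by
  unfold ep
  rw [Finset.card_eq_sum_card_fiberwise (f := Prod.snd) (t := B)
    (by intro p hp; simp only [Finset.mem_coe, mem_filter, mem_product] at hp; exact hp.1.2)]
  refine Finset.sum_congr rfl ?_
  intro y hy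
  refine Finset.card_nbij' (fun p => p.1) (fun a => (a, y)) ?_ ?_ ?_ ?_
  · intro p hp
    simp only [Finset.mem_coe, mem_filter, mem_product] at hp
    obtain ⟨⟨⟨h1, h2⟩, h3⟩, h4⟩ := hp
    subst h4
    simp only [Finset.mem_coe, degIn, mem_inter, SimpleGraph.mem_neighborFinset]
    exact ⟨h1, h3.symm⟩
  · intro a ha
    simp only [Finset.mem_coe, degIn, mem_inter, SimpleGraph.mem_neighborFinset] at ha
    simp only [Finset.mem_coe, mem_filter, mem_product]
    exact ⟨⟨⟨ha.1, hy⟩, ha.2.symm⟩, trivial⟩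
  · intro p hp
    simp only [Finset.mem_coe, mem_filter] at hp
    exact Prod.ext rfl hp.2.symm
  · intro a _
    rfl

/-- cut-density in finset form. -/
lemma cutdense_finset (hG : CutDense G q) (A : Finset V) :
    q * A.card * (Aᶜ.card : ℝ) ≤ (ep G A Aᶜ : ℕ) := by
  have h := hG (A : Set V) ((Aᶜ : Finset V) : Set V)
    (by rw [Finset.coe_compl]; exact Set.union_compl_self _)
    (by rw [Finset.coe_compl]; exact disjoint_compl_right)
  rw [Set.ncard_coe_finset, Set.ncard_coe_finset] at h
  rwa [pairs_set_eq A Aᶜ, Set.ncard_coe_finset, pairs_card_eq] at h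

lemma min_degree (hG : CutDense G q) (x : V) :
    q * ((Fintype.card V : ℝ) - 1) ≤ (G.neighborFinset x).card := by
  have h := cutdense_finset hG {x}
  have hc : (({x} : Finset V)ᶜ.card : ℝ) = (Fintype.card V : ℝ) - 1 := by
    rw [Finset.card_compl, Finset.card_singleton]
    have : 1 ≤ Fintype.card V := Fintype.card_pos_iff.2 ⟨x⟩
    push_cast [this]
    ring
  have hsum : ep G {x} ({x} : Finset V)ᶜ = (G.neighborFinset x).card := by
    unfold ep
    have h1 : ∀ y ∈ ({x} : Finset V)ᶜ, degIn G y {x} =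
        if y ∈ G.neighborFinset x then 1 else 0 := by
      intro y _
      unfold degIn
      by_cases hadj : G.Adj x y
      · rw [if_pos (by rwa [SimpleGraph.mem_neighborFinset])]
        have hx : ({x} : Finset V) ∩ G.neighborFinset y = {x} := by
          apply Finset.inter_eq_left.2
          intro z hz
          rw [Finset.mem_singleton] at hz
          subst hz
          rw [SimpleGraph.mem_neighborFinset]
          exact hadj.symm
        rw [hx, card_singleton]
      · rw [if_neg (by rwa [SimpleGraph.mem_neighborFinset])]
        have hx : ({x} : Finset V) ∩ G.neighborFinset y = ∅ := by
          apply Finset.eq_empty_of_forall_notMem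
          intro z hz
          simp only [mem_inter, mem_singleton, SimpleGraph.mem_neighborFinset] at hz
          apply hadj
          have hz1 := hz.1
          have hz2 := hz.2.symm
          rwa [hz1] at hz2
        rw [hx, card_empty]
    rw [Finset.sum_congr rfl h1, Finset.sum_ite_mem]
    have h2 : ({x} : Finset V)ᶜ ∩ G.neighborFinset x = G.neighborFinset x := by
      apply Finset.inter_eq_right.2
      intro z hz
      rw [Finset.mem_compl, Finset.mem_singleton]
      rintro rfl
      rw [SimpleGraph.mem_neighborFinset] at hz
      exact G.irrefl hz
    rw [h2, Finset.sum_const, smul_eq_mul, mul_one]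
  rw [hsum] at h
  rw [Finset.card_singleton] at h
  rw [hc] at h
  calc q * ((Fintype.card V : ℝ) - 1) = q * 1 * ((Fintype.card V : ℝ) - 1) := by ring
    _ ≤ _ := by exact_mod_cast h

lemma q_le_one (hG : CutDense G q) (hq : 0 < q) (hn : 2 ≤ Fintype.card V) : q ≤ 1 := by
  have hx : Nonempty V := Fintype.card_pos_iff.1 (by omega)
  obtain ⟨x⟩ := hx
  have h1 := min_degree hG x
  have h2 : (G.neighborFinset x).card ≤ Fintype.card V - 1 := by
    have : G.neighborFinset x ⊆ ({x} : Finset V)ᶜ := by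
      intro z hz
      rw [Finset.mem_compl, Finset.mem_singleton]
      rintro rfl
      rw [SimpleGraph.mem_neighborFinset] at hz
      exact G.irrefl hz
    calc (G.neighborFinset x).card ≤ (({x} : Finset V)ᶜ).card := card_le_card this
      _ = Fintype.card V - 1 := by rw [Finset.card_compl, Finset.card_singleton]
  have h2' : ((G.neighborFinset x).card : ℝ) ≤ (Fintype.card V : ℝ) - 1 := by
    have := (Nat.cast_le (α := ℝ)).2 h2
    have hcard : ((Fintype.card V - 1 : ℕ) : ℝ) = (Fintype.card V : ℝ) - 1 := by
      push_cast [Nat.cast_sub (by omega : 1 ≤ Fintype.card V)]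
      ring
    linarith [hcard ▸ this]
  have h3 : (0:ℝ) < (Fintype.card V : ℝ) - 1 := by
    have : (2:ℝ) ≤ (Fintype.card V : ℝ) := by exact_mod_cast hn
    linarith
  nlinarith [h1, h2', h3]

lemma shrink (hG : CutDense G q) (hq : 0 < q) (hq1 : q ≤ 1) (A : Finset V) (hA : A.Nonempty)
    (D' : ℕ) (hD : (D' : ℝ) ≤ q * A.card / 4) :
    ((Aᶜ.filter (fun y => degIn G y A < D')).card : ℝ) ≤ (1 - 3*q/4) * (Aᶜ.card : ℝ) := by
  classical
  set bad := Aᶜ.filter (fun y => degIn G y A < D') with hbaddef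
  have hsub : bad ⊆ Aᶜ := Finset.filter_subset _ _
  have hbc : bad.card ≤ Aᶜ.card := card_le_card hsub
  -- split the edge sum
  have hsplit : ep G A Aᶜ ≤ bad.card * D' + (Aᶜ.card - bad.card) * A.card := by
    unfold ep
    rw [← Finset.sum_filter_add_sum_filter_not Aᶜ (fun y => degIn G y A < D')]
    have hb1 : ∑ y ∈ Aᶜ.filter (fun y => degIn G y A < D'), degIn G y A ≤ bad.card * D' := by
      calc ∑ y ∈ Aᶜ.filter (fun y => degIn G y A < D'), degIn G y A
          ≤ ∑ _y ∈ Aᶜ.filter (fun y => degIn G y A < D'), D' :=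
            Finset.sum_le_sum (fun y hy => le_of_lt (Finset.mem_filter.1 hy).2)
        _ = bad.card * D' := by rw [Finset.sum_const, smul_eq_mul, hbaddef]
    have hb2 : ∑ y ∈ Aᶜ.filter (fun y => ¬ degIn G y A < D'), degIn G y A ≤
        (Aᶜ.card - bad.card) * A.card := by
      have htot := Finset.card_filter_add_card_filter_not
        (s := Aᶜ) (p := fun y => degIn G y A < D')
      rw [← hbaddef] at htot
      have hcard2 : (Aᶜ.filter (fun y => ¬ degIn G y A < D')).card = Aᶜ.card - bad.card := by
        omega
      calc ∑ y ∈ Aᶜ.filter (fun y => ¬ degIn G y A < D'), degIn G y A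
          ≤ ∑ _y ∈ Aᶜ.filter (fun y => ¬ degIn G y A < D'), A.card :=
            Finset.sum_le_sum (fun y _ => degIn_le_card y A)
        _ = (Aᶜ.card - bad.card) * A.card := by
            rw [Finset.sum_const, smul_eq_mul, hcard2]
    omega
  have hcd := cutdense_finset hG A
  set a : ℝ := (A.card : ℝ) with hadef
  set c : ℝ := (Aᶜ.card : ℝ) with hcdef
  set b : ℝ := (bad.card : ℝ) with hbdef
  have ha1 : 1 ≤ a := by
    rw [hadef]
    exact_mod_cast Finset.card_pos.2 hA
  have ha0 : 0 < a := by linarith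
  have hb0 : 0 ≤ b := by rw [hbdef]; positivity
  have hc0 : 0 ≤ c := by rw [hcdef]; positivity
  have hbc' : b ≤ c := by rw [hbdef, hcdef]; exact_mod_cast hbc
  have hsplit' : (ep G A Aᶜ : ℝ) ≤ b * D' + (c - b) * a := by
    have hcast : ((bad.card * D' + (Aᶜ.card - bad.card) * A.card : ℕ) : ℝ)
        = b * D' + (c - b) * a := by
      push_cast [Nat.cast_sub hbc]
      ring
    calc (ep G A Aᶜ : ℝ) ≤ ((bad.card * D' + (Aᶜ.card - bad.card) * A.card : ℕ) : ℝ) := by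
          exact_mod_cast hsplit
      _ = _ := hcast
  have hmain : q * a * c ≤ b * (q * a / 4) + (c - b) * a := by
    have hD' : (D' : ℝ) ≤ q * a / 4 := hD
    have : b * (D' : ℝ) ≤ b * (q * a / 4) := by
      exact mul_le_mul_of_nonneg_left hD' hb0
    linarith
  have key : q * c + b ≤ q * b / 4 + c := by
    have h' : a * (q * c) ≤ a * (q * b / 4 + c - b) := by nlinarith [hmain]
    have := le_of_mul_le_mul_left h' ha0
    linarith
  nlinarith [key, mul_nonneg hc0 (mul_nonneg hq.le hq.le), mul_nonneg hb0 hq.le,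
    mul_nonneg hc0 hq.le]

lemma ep_erase_B (A B : Finset V) (b : V) (hb : b ∈ B) :
    ep G A B = ep G A (B.erase b) + degIn G b A :=
  (Finset.sum_erase_add _ _ hb).symm

lemma ep_erase_A (A B : Finset V) (a : V) :
    ep G A B ≤ ep G (A.erase a) B + degIn G a B := by
  unfold ep
  have hpt : ∀ y ∈ B, degIn G y A ≤ degIn G y (A.erase a) +
      (if y ∈ G.neighborFinset a then 1 else 0) := by
    intro y _
    by_cases hmem : y ∈ G.neighborFinset a
    · rw [if_pos hmem]
      unfold degIn
      have hsub : A ∩ G.neighborFinset y ⊆ (A.erase a ∩ G.neighborFinset y) ∪ {a} := by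
        intro z hz
        rw [mem_inter] at hz
        by_cases hza : z = a
        · subst hza
          exact mem_union_right _ (mem_singleton_self z)
        · exact mem_union_left _ (mem_inter.2 ⟨mem_erase.2 ⟨hza, hz.1⟩, hz.2⟩)
      calc (A ∩ G.neighborFinset y).card
          ≤ ((A.erase a ∩ G.neighborFinset y) ∪ {a}).card := card_le_card hsub
        _ ≤ (A.erase a ∩ G.neighborFinset y).card + 1 := by
            refine le_trans (card_union_le _ _) ?_
            rw [card_singleton]
    · rw [if_neg hmem, add_zero]
      apply card_le_card
      intro z hz
      rw [mem_inter] at hz ⊢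
      refine ⟨mem_erase.2 ⟨?_, hz.1⟩, hz.2⟩
      rintro rfl
      apply hmem
      rw [SimpleGraph.mem_neighborFinset] at hz ⊢
      exact hz.2.symm
  calc ∑ y ∈ B, degIn G y A
      ≤ ∑ y ∈ B, (degIn G y (A.erase a) + if y ∈ G.neighborFinset a then 1 else 0) :=
        Finset.sum_le_sum hpt
    _ = ∑ y ∈ B, degIn G y (A.erase a) + ∑ y ∈ B, (if y ∈ G.neighborFinset a then 1 else 0) :=
        Finset.sum_add_distrib
    _ = ∑ y ∈ B, degIn G y (A.erase a) + degIn G a B := by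
        rw [Finset.sum_ite_mem]
        unfold degIn
        rw [Finset.sum_const, smul_eq_mul, mul_one]

/-- bipartite `D`-core. -/
lemma core (D : ℕ) : ∀ (k : ℕ) (A B : Finset V), A.card + B.card ≤ k →
    ∃ A' B', A' ⊆ A ∧ B' ⊆ B ∧
      (∀ a ∈ A', D ≤ degIn G a B') ∧ (∀ b ∈ B', D ≤ degIn G b A') ∧
      ep G A B ≤ ep G A' B' + D * (A.card + B.card) := by
  intro k
  induction k with
  | zero =>
    intro A B hk
    refine ⟨A, B, Finset.Subset.refl _, Finset.Subset.refl _, ?_, ?_, le_add_right (le_refl _)⟩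
    · intro a ha
      exact absurd (Finset.card_pos.2 ⟨a, ha⟩) (by omega)
    · intro b hb
      exact absurd (Finset.card_pos.2 ⟨b, hb⟩) (by omega)
  | succ k ih =>
    intro A B hk
    by_cases hA : ∃ a ∈ A, degIn G a B < D
    · obtain ⟨a, haA, haD⟩ := hA
      have hcard : (A.erase a).card + B.card ≤ k := by
        rw [Finset.card_erase_of_mem haA]
        have : 1 ≤ A.card := Finset.card_pos.2 ⟨a, haA⟩
        omega
      obtain ⟨A', B', h1, h2, h3, h4, h5⟩ := ih (A.erase a) B hcard
      refine ⟨A', B', Finset.Subset.trans h1 (Finset.erase_subset _ _), h2, h3, h4, ?_⟩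
      have h6 := ep_erase_A (G := G) A B a
      have h7 : 1 ≤ A.card := Finset.card_pos.2 ⟨a, haA⟩
      have h8 : (A.erase a).card = A.card - 1 := Finset.card_erase_of_mem haA
      rw [h8] at h5
      have hmul : D * (A.card - 1 + B.card) + D = D * (A.card + B.card) := by
        have heq : A.card - 1 + B.card + 1 = A.card + B.card := by omega
        calc D * (A.card - 1 + B.card) + D = D * (A.card - 1 + B.card + 1) := by ring
          _ = D * (A.card + B.card) := by rw [heq]
      omega
    · by_cases hB : ∃ b ∈ B, degIn G b A < D
      · obtain ⟨b, hbB, hbD⟩ := hB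
        have hcard : A.card + (B.erase b).card ≤ k := by
          rw [Finset.card_erase_of_mem hbB]
          have : 1 ≤ B.card := Finset.card_pos.2 ⟨b, hbB⟩
          omega
        obtain ⟨A', B', h1, h2, h3, h4, h5⟩ := ih A (B.erase b) hcard
        refine ⟨A', B', h1, Finset.Subset.trans h2 (Finset.erase_subset _ _), h3, h4, ?_⟩
        have h6 := ep_erase_B (G := G) A B b hbB
        have h7 : 1 ≤ B.card := Finset.card_pos.2 ⟨b, hbB⟩
        have h8 : (B.erase b).card = B.card - 1 := Finset.card_erase_of_mem hbB
        rw [h8] at h5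
        have hmul : D * (A.card + (B.card - 1)) + D = D * (A.card + B.card) := by
          have heq : A.card + (B.card - 1) + 1 = A.card + B.card := by omega
          calc D * (A.card + (B.card - 1)) + D = D * (A.card + (B.card - 1) + 1) := by ring
            _ = D * (A.card + B.card) := by rw [heq]
        omega
      · push_neg at hA hB
        exact ⟨A, B, Finset.Subset.refl _, Finset.Subset.refl _, hA, hB,
          le_add_right (le_refl _)⟩

/-- size bound for the perfect tree of height `t` with root branching `b`. -/
def tsize (Δ : ℕ) : ℕ → ℕ → ℕ
  | 0, _ => 1
  | (t+1), b => 1 + b * tsize Δ t (Δ - 1)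

lemma tsize_zero (Δ b : ℕ) : tsize Δ 0 b = 1 := rfl

lemma tsize_succ (Δ t b : ℕ) : tsize Δ (t+1) b = 1 + b * tsize Δ t (Δ - 1) := rfl

lemma tsize_pos (Δ t b : ℕ) : 1 ≤ tsize Δ t b := by
  cases t with
  | zero => exact le_refl 1
  | succ t => rw [tsize_succ]; omega

lemma build (Y : ℕ → Finset V) (D Δ : ℕ)
    (HY : ∀ j x, x ∈ Y (j+1) → D ≤ degIn G x (Y j)) :
    ∀ t b x (F : Finset V), x ∈ Y t → F.card + tsize Δ t b ≤ D → x ∉ F →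
    ∃ (s : Finset V) (par : V → V) (lev : V → ℕ),
      x ∈ s ∧ (∀ y ∈ s, y ∉ F) ∧ s.card ≤ tsize Δ t b ∧ lev x = 0 ∧
      (∀ y ∈ s, lev y ≤ t ∧ y ∈ Y (t - lev y)) ∧
      (∀ y ∈ s, y ≠ x → par y ∈ s ∧ G.Adj (par y) y ∧ lev y = lev (par y) + 1) ∧
      (∀ y ∈ s, (s.filter (fun z => z ≠ x ∧ par z = y)).card =
        if lev y = t then 0 else if y = x then b else Δ - 1) := by
  intro t
  induction t with
  | zero =>
    intro b x F hx _hF hxF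
    refine ⟨{x}, id, fun _ => 0, mem_singleton_self x, ?_, ?_, rfl, ?_, ?_, ?_⟩
    · intro y hy
      rw [mem_singleton] at hy
      subst hy; exact hxF
    · rw [card_singleton, tsize_zero]
    · intro y hy
      rw [mem_singleton] at hy
      subst hy
      exact ⟨le_refl 0, hx⟩
    · intro y hy hyx
      rw [mem_singleton] at hy
      exact absurd hy hyx
    · intro y hy
      rw [mem_singleton] at hy
      subst hy
      rw [if_pos rfl]
      rw [Finset.card_eq_zero, Finset.filter_eq_empty_iff]
      intro z hz
      rw [mem_singleton] at hz
      subst hz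
      intro hcon
      exact hcon.1 rfl
  | succ t ih =>
    intro b
    induction b with
    | zero =>
      intro x F hx _hF hxF
      refine ⟨{x}, id, fun _ => 0, mem_singleton_self x, ?_, ?_, rfl, ?_, ?_, ?_⟩
      · intro y hy
        rw [mem_singleton] at hy
        subst hy; exact hxF
      · rw [card_singleton, tsize_succ]; omega
      · intro y hy
        rw [mem_singleton] at hy
        subst hy
        exact ⟨Nat.zero_le _, hx⟩
      · intro y hy hyx
        rw [mem_singleton] at hy
        exact absurd hy hyx
      · intro y hy
        rw [mem_singleton] at hy
        subst hy
        rw [if_neg (by simp), if_pos rfl]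
        rw [Finset.card_eq_zero, Finset.filter_eq_empty_iff]
        intro z hz
        rw [mem_singleton] at hz
        subst hz
        intro hcon
        exact hcon.1 rfl
    | succ m ihm =>
      intro x F hx hF hxF
      set z := tsize Δ t (Δ - 1) with hzdef
      have hz1 : 1 ≤ z := tsize_pos Δ t (Δ - 1)
      have hsm : tsize Δ (t+1) (m+1) = 1 + (m * z + z) := by
        rw [tsize_succ, Nat.succ_mul]
      have hsmm : tsize Δ (t+1) m = 1 + m * z := tsize_succ Δ t m
      -- build the first m subtrees
      obtain ⟨s', par', lev', hxs', hF', hcard', hlevx', hP6', hP3', hP4'⟩ :=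
        ihm x F hx (by rw [hsmm]; rw [hsm] at hF; omega) hxF
      rw [hsmm] at hcard'
      -- pick a fresh child r
      have hdeg : D ≤ degIn G x (Y t) := HY t x hx
      have hcardav : 1 ≤ (((Y t) ∩ G.neighborFinset x) \ (F ∪ s')).card := by
        have h1 : ((Y t) ∩ G.neighborFinset x).card ≤
            (((Y t) ∩ G.neighborFinset x) \ (F ∪ s')).card + (F ∪ s').card :=
          Finset.card_le_card_sdiff_add_card
        have h2 : (F ∪ s').card ≤ F.card + s'.card := card_union_le _ _
        have h3 : D ≤ ((Y t) ∩ G.neighborFinset x).card := hdeg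
        rw [hsm] at hF
        omega
      obtain ⟨r, hr⟩ := Finset.card_pos.1 (by omega : 0 < (((Y t) ∩ G.neighborFinset x) \ (F ∪ s')).card)
      rw [Finset.mem_sdiff, Finset.mem_inter, Finset.mem_union, SimpleGraph.mem_neighborFinset] at hr
      obtain ⟨⟨hrY, hrAdj⟩, hrFs⟩ := hr
      push_neg at hrFs
      obtain ⟨hrF, hrs'⟩ := hrFs
      -- build the subtree rooted at r
      obtain ⟨sr, parr, levr, hrsr, hFr, hcardr, hlevr, hP6r, hP3r, hP4r⟩ :=
        ih (Δ - 1) r (F ∪ s') hrY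
          (by
            have h2 : (F ∪ s').card ≤ F.card + s'.card := card_union_le _ _
            rw [hsm] at hF
            omega)
          (by rw [Finset.mem_union]; push_neg; exact ⟨hrF, hrs'⟩)
      -- basic disjointness facts
      have hdisj : ∀ y ∈ sr, y ∉ s' := by
        intro y hy hys'
        exact hFr y hy (Finset.mem_union_right _ hys')
      have hxsr : x ∉ sr := fun h => hdisj x h hxs'
      -- the combined structure
      refine ⟨s' ∪ sr,
        fun w => if w ∈ sr then (if w = r then x else parr w) else par' w,
        fun w => if w ∈ sr then levr w + 1 else lev' w,
        Finset.mem_union_left _ hxs', ?_, ?_, ?_, ?_, ?_, ?_⟩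
      · -- avoids F
        intro y hy
        rw [Finset.mem_union] at hy
        rcases hy with hy | hy
        · exact hF' y hy
        · intro hyF
          exact hFr y hy (Finset.mem_union_left _ hyF)
      · -- cardinality
        calc (s' ∪ sr).card ≤ s'.card + sr.card := card_union_le _ _
          _ ≤ (1 + m * z) + z := by omega
          _ = tsize Δ (t+1) (m+1) := by rw [hsm]; ring
      · -- lev x = 0
        simp only []
        rw [if_neg hxsr]
        exact hlevx'
      · -- levels and membership in Y
        intro y hy
        simp only []
        rw [Finset.mem_union] at hy
        by_cases hysr : y ∈ sr
        · rw [if_pos hysr]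
          obtain ⟨hle, hmem⟩ := hP6r y hysr
          constructor
          · omega
          · rw [Nat.succ_sub_succ]
            exact hmem
        · rw [if_neg hysr]
          rcases hy with hy | hy
          · exact hP6' y hy
          · exact absurd hy hysr
      · -- parent structure
        intro y hy hyx
        simp only []
        rw [Finset.mem_union] at hy
        by_cases hysr : y ∈ sr
        · by_cases hyr : y = r
          · subst hyr
            rw [if_pos hysr, if_pos rfl]
            refine ⟨Finset.mem_union_left _ hxs', hrAdj, ?_⟩
            rw [if_neg hxsr, hlevx', if_pos hysr, hlevr]
          · rw [if_pos hysr, if_neg hyr]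
            obtain ⟨hp1, hp2, hp3⟩ := hP3r y hysr hyr
            refine ⟨Finset.mem_union_right _ hp1, hp2, ?_⟩
            rw [if_pos hysr, if_pos hp1, hp3]
        · have hys' : y ∈ s' := by
            rcases hy with hy | hy
            · exact hy
            · exact absurd hy hysr
          rw [if_neg hysr]
          obtain ⟨hp1, hp2, hp3⟩ := hP3' y hys' hyx
          have hpnotr : par' y ∉ sr := fun h => hdisj _ h hp1
          refine ⟨Finset.mem_union_left _ hp1, hp2, ?_⟩
          rw [if_neg hysr, if_neg hpnotr, hp3]
      · -- children counts
        intro y hy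
        simp only []
        rw [Finset.mem_union] at hy
        rw [Finset.filter_union]
        by_cases hysr : y ∈ sr
        · -- y in the new subtree
          have hys' : y ∉ s' := hdisj y hysr
          have hyx : y ≠ x := fun h => hxsr (h ▸ hysr)
          have hempty : (s'.filter (fun w => w ≠ x ∧
              (if w ∈ sr then (if w = r then x else parr w) else par' w) = y)) = ∅ := by
            rw [Finset.filter_eq_empty_iff]
            intro w hw
            have hwsr : w ∉ sr := fun h => hdisj w h hw
            rw [if_neg hwsr]
            rintro ⟨hwx, hwpar⟩
            obtain ⟨hq1, _, _⟩ := hP3' w hw hwx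
            rw [hwpar] at hq1
            exact hys' hq1
          have heq : (sr.filter (fun w => w ≠ x ∧
              (if w ∈ sr then (if w = r then x else parr w) else par' w) = y)) =
              sr.filter (fun w => w ≠ r ∧ parr w = y) := by
            apply Finset.filter_congr
            intro w hw
            rw [if_pos hw]
            constructor
            · rintro ⟨hwx, hwpar⟩
              by_cases hwr : w = r
              · exfalso
                rw [if_pos hwr] at hwpar
                rw [← hwpar] at hysr
                exact hxsr hysr
              · rw [if_neg hwr] at hwpar
                exact ⟨hwr, hwpar⟩
            · rintro ⟨hwr, hwpar⟩
              refine ⟨fun hwx => hxsr (hwx ▸ hw), ?_⟩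
              rw [if_neg hwr]
              exact hwpar
          rw [hempty, heq, Finset.empty_union, hP4r y hysr]
          have hlevy : (if y ∈ sr then levr y + 1 else lev' y) = levr y + 1 := if_pos hysr
          simp only [hlevy]
          by_cases hc : levr y = t
          · rw [if_pos hc, if_pos (by omega : levr y + 1 = t + 1)]
          · rw [if_neg hc, if_neg (by omega : ¬ levr y + 1 = t + 1), if_neg hyx, ite_self]
        · -- y in the old part
          have hys' : y ∈ s' := by
            rcases hy with hy | hy
            · exact hy
            · exact absurd hy hysr
          have hsrpart : (sr.filter (fun w => w ≠ x ∧
              (if w ∈ sr then (if w = r then x else parr w) else par' w) = y)) =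
              if y = x then {r} else ∅ := by
            by_cases hyx : y = x
            · rw [if_pos hyx]
              apply Finset.ext
              intro w
              rw [Finset.mem_filter, Finset.mem_singleton]
              constructor
              · rintro ⟨hwsr, hwx, hwpar⟩
                rw [if_pos hwsr] at hwpar
                by_cases hwr : w = r
                · exact hwr
                · exfalso
                  rw [if_neg hwr] at hwpar
                  obtain ⟨hq1, _, _⟩ := hP3r w hwsr hwr
                  rw [hwpar, hyx] at hq1
                  exact hxsr hq1
              · rintro rfl
                refine ⟨hrsr, fun h => hxsr (h ▸ hrsr), ?_⟩
                rw [if_pos hrsr, if_pos rfl, hyx]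
            · rw [if_neg hyx]
              rw [Finset.filter_eq_empty_iff]
              intro w hwsr
              rw [if_pos hwsr]
              rintro ⟨hwx, hwpar⟩
              by_cases hwr : w = r
              · rw [if_pos hwr] at hwpar
                exact hyx hwpar.symm
              · rw [if_neg hwr] at hwpar
                obtain ⟨hq1, _, _⟩ := hP3r w hwsr hwr
                rw [hwpar] at hq1
                exact hdisj y hq1 hys'
          have hs'part : (s'.filter (fun w => w ≠ x ∧
              (if w ∈ sr then (if w = r then x else parr w) else par' w) = y)) =
              s'.filter (fun w => w ≠ x ∧ par' w = y) := by
            apply Finset.filter_congr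
            intro w hw
            have hwsr : w ∉ sr := fun h => hdisj w h hw
            rw [if_neg hwsr]
          rw [hsrpart, hs'part]
          have hcount := hP4' y hys'
          have hlevy : (if y ∈ sr then levr y + 1 else lev' y) = lev' y := if_neg hysr
          simp only [hlevy]
          by_cases hyx : y = x
          · have hlev0 : lev' y = 0 := by rw [hyx]; exact hlevx'
            rw [if_pos hyx]
            rw [if_neg (by omega : ¬ lev' y = t + 1), if_pos hyx]
            rw [if_neg (by omega : ¬ lev' y = t + 1), if_pos hyx] at hcount
            have hrnot : Disjoint (s'.filter (fun w => w ≠ x ∧ par' w = y)) ({r} : Finset V) := by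
              rw [Finset.disjoint_singleton_right]
              intro h
              exact hrs' (Finset.mem_of_mem_filter r h)
            rw [Finset.card_union_of_disjoint hrnot, hcount, Finset.card_singleton]
          · rw [if_neg hyx, Finset.union_empty, hcount]
            by_cases hc : lev' y = t + 1
            · rw [if_pos hc, if_pos hc]
            · rw [if_neg hc, if_neg hc, if_neg hyx, if_neg hyx]

lemma assemble (U : Set V) (v : V) (s : Finset V) (par : V → V) (lev : V → ℕ) (Δ h : ℕ)
    (hΔ : 1 ≤ Δ) (hh : 1 ≤ h)
    (hv : v ∈ s) (hlv : lev v = 0)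
    (hP3 : ∀ y ∈ s, y ≠ v → par y ∈ s ∧ G.Adj (par y) y ∧ lev y = lev (par y) + 1)
    (hP4 : ∀ y ∈ s, (s.filter (fun z => z ≠ v ∧ par z = y)).card =
      if lev y = h then 0 else if y = v then Δ else Δ - 1)
    (hleaf : ∀ y ∈ s, lev y = h → y ∈ U) :
    ∃ (H : G.Subgraph) (hv' : v ∈ H.verts),
      H.coe.IsTree ∧
      ∀ u : V, ∀ hu : u ∈ H.verts,
        (H.neighborSet u).ncard = Δ ∨
        ((H.neighborSet u).ncard ≤ 1 ∧ u ∈ U ∧ H.coe.dist ⟨v, hv'⟩ ⟨u, hu⟩ = h) := by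
  classical
  have root_of_lev0 : ∀ y ∈ s, lev y = 0 → y = v := by
    intro y hy h0
    by_contra hne
    have h3 := (hP3 y hy hne).2.2
    omega
  let H : G.Subgraph := {
    verts := ↑s
    Adj := fun a b => a ∈ s ∧ b ∈ s ∧ ((a ≠ v ∧ par a = b) ∨ (b ≠ v ∧ par b = a))
    adj_sub := by
      rintro a b ⟨ha, hb, ⟨hne, hpar⟩ | ⟨hne, hpar⟩⟩
      · obtain ⟨_, hadj, _⟩ := hP3 a ha hne
        rw [hpar] at hadj
        exact hadj.symm
      · obtain ⟨_, hadj, _⟩ := hP3 b hb hne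
        rw [hpar] at hadj
        exact hadj
    edge_vert := by
      rintro a b ⟨ha, _, _⟩
      exact Finset.mem_coe.2 ha
    symm := by
      constructor
      rintro a b ⟨ha, hb, hor⟩
      exact ⟨hb, ha, hor.symm⟩ }
  have hHadj : ∀ a b : V, H.Adj a b ↔
      (a ∈ s ∧ b ∈ s ∧ ((a ≠ v ∧ par a = b) ∨ (b ≠ v ∧ par b = a))) := fun _ _ => Iff.rfl
  have hvmem : v ∈ H.verts := Finset.mem_coe.2 hv
  have hmem : ∀ a : ↥H.verts, (a : V) ∈ s := fun a => Finset.mem_coe.1 a.2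
  -- walks to the root
  have hwalk : ∀ (k : ℕ) (a : ↥H.verts), lev ↑a = k →
      ∃ p : H.coe.Walk a ⟨v, hvmem⟩, p.length = k := by
    intro k
    induction k with
    | zero =>
      intro a h0
      have hav : (a : V) = v := root_of_lev0 _ (hmem a) h0
      have : a = (⟨v, hvmem⟩ : ↥H.verts) := Subtype.ext hav
      rw [this]
      exact ⟨SimpleGraph.Walk.nil, rfl⟩
    | succ k ihk =>
      intro a hk
      have hne : (a : V) ≠ v := by
        intro he
        rw [he, hlv] at hk
        omega
      obtain ⟨hp1, _hp2, hp3⟩ := hP3 ↑a (hmem a) hne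
      have hbmem : par ↑a ∈ H.verts := Finset.mem_coe.2 hp1
      have hadj : H.coe.Adj a ⟨par ↑a, hbmem⟩ := by
        show H.Adj ↑a (par ↑a)
        exact ⟨hmem a, hp1, Or.inl ⟨hne, rfl⟩⟩
      obtain ⟨p, hp⟩ := ihk ⟨par ↑a, hbmem⟩ (by show lev (par ↑a) = k; omega)
      refine ⟨SimpleGraph.Walk.cons hadj p, ?_⟩
      rw [SimpleGraph.Walk.length_cons, hp]
  -- level changes by exactly one along edges
  have hstep : ∀ a b : ↥H.verts, H.coe.Adj a b →
      lev ↑a = lev ↑b + 1 ∨ lev ↑b = lev ↑a + 1 := by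
    intro a b hab
    have hab' : H.Adj ↑a ↑b := hab
    rcases hab'.2.2 with ⟨hne, hpar⟩ | ⟨hne, hpar⟩
    · left
      obtain ⟨_, _, h3⟩ := hP3 ↑a (hmem a) hne
      rw [hpar] at h3
      exact h3
    · right
      obtain ⟨_, _, h3⟩ := hP3 ↑b (hmem b) hne
      rw [hpar] at h3
      exact h3
  -- level bound along walks
  have hlb : ∀ (a b : ↥H.verts) (p : H.coe.Walk a b),
      lev ↑a ≤ lev ↑b + p.length ∧ lev ↑b ≤ lev ↑a + p.length := by
    intro a b p
    induction p with
    | nil => omega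
    | @cons a c b hac q ihq =>
      obtain ⟨ih1, ih2⟩ := ihq
      rw [SimpleGraph.Walk.length_cons]
      rcases hstep a c hac with hs | hs
      · omega
      · omega
  -- preconnected
  have hpre : H.coe.Preconnected := by
    intro a b
    obtain ⟨pa, _⟩ := hwalk (lev ↑a) a rfl
    obtain ⟨pb, _⟩ := hwalk (lev ↑b) b rfl
    exact SimpleGraph.Reachable.trans ⟨pa⟩ (SimpleGraph.Reachable.symm ⟨pb⟩)
  -- distance from the root
  have hdist : ∀ a : ↥H.verts, H.coe.dist ⟨v, hvmem⟩ a = lev ↑a := by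
    intro a
    obtain ⟨p, hp⟩ := hwalk (lev ↑a) a rfl
    have hle : H.coe.dist ⟨v, hvmem⟩ a ≤ lev ↑a := by
      have hd := SimpleGraph.dist_le p.reverse
      rw [SimpleGraph.Walk.length_reverse, hp] at hd
      exact hd
    have hge : lev ↑a ≤ H.coe.dist ⟨v, hvmem⟩ a := by
      obtain ⟨q, hq⟩ := SimpleGraph.Reachable.exists_walk_length_eq_dist
        (SimpleGraph.Reachable.symm ⟨p⟩)
      have := (hlb _ _ q).2
      rw [hq] at this
      have hlvv : lev ((⟨v, hvmem⟩ : ↥H.verts) : V) = 0 := hlv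
      omega
    omega
  -- acyclicity
  have hacyc : H.coe.IsAcyclic := by
    have key : ∀ (y : ↥H.verts) (d : H.coe.Walk y y), d.IsCycle →
        (∀ z ∈ d.support, lev (z : V) ≤ lev (y : V)) → False := by
      intro y d hd hmax
      cases d with
      | nil => simpa using hd.three_le_length
      | @cons _ c _ hadj q =>
        have hd3 : 3 ≤ q.length + 1 := by
          have := hd.three_le_length
          rwa [SimpleGraph.Walk.length_cons] at this
        have hstepdown : ∀ b : ↥H.verts, H.coe.Adj y b → lev (b : V) ≤ lev (y : V) →
            ((y : V) ≠ v ∧ par ↑y = ↑b) := by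
          intro b hyb hble
          rcases hstep y b hyb with hs | hs
          · have hyb' : H.Adj ↑y ↑b := hyb
            rcases hyb'.2.2 with hcase | hcase
            · exact hcase
            · exfalso
              obtain ⟨_, _, h3⟩ := hP3 ↑b (hmem b) hcase.1
              rw [hcase.2] at h3
              omega
          · omega
        -- first neighbour
        have hcsup : c ∈ (SimpleGraph.Walk.cons hadj q).support := by
          rw [SimpleGraph.Walk.support_cons]
          exact List.mem_cons_of_mem _ q.start_mem_support
        have hc1 := hstepdown c hadj (hmax c hcsup)
        -- last neighbour via the reverse of q
        cases hq : q.reverse with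
        | nil =>
          have : q.length = 0 := by
            have := congrArg SimpleGraph.Walk.length hq
            rwa [SimpleGraph.Walk.length_reverse] at this
          omega
        | @cons _ w _ hadj2 q2 =>
          have hwsup : w ∈ (SimpleGraph.Walk.cons hadj q).support := by
            rw [SimpleGraph.Walk.support_cons]
            apply List.mem_cons_of_mem
            have hw1 : w ∈ q.reverse.support := by
              rw [hq, SimpleGraph.Walk.support_cons]
              exact List.mem_cons_of_mem _ q2.start_mem_support
            rwa [SimpleGraph.Walk.support_reverse, List.mem_reverse] at hw1
          have hc2 := hstepdown w hadj2 (hmax w hwsup)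
          -- hence c = w
          have hcw : c = w := Subtype.ext (by rw [← hc1.2, ← hc2.2])
          -- but the first and last edges of the cycle are distinct
          have hnodup := hd.isCircuit.isTrail.edges_nodup
          rw [SimpleGraph.Walk.edges_cons] at hnodup
          have hnotmem := (List.nodup_cons.1 hnodup).1
          apply hnotmem
          have hwe : s(↑y, ↑w) ∈ q.reverse.edges := by
            rw [hq, SimpleGraph.Walk.edges_cons]
            exact List.mem_cons_self
          rw [SimpleGraph.Walk.edges_reverse, List.mem_reverse] at hwe
          subst hcw
          exact hwe
    intro a d hd
    have hne : d.support.toFinset.Nonempty :=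
      ⟨a, List.mem_toFinset.2 d.start_mem_support⟩
    obtain ⟨y, hymem, hymax⟩ := Finset.exists_max_image d.support.toFinset
      (fun z => lev (z : V)) hne
    rw [List.mem_toFinset] at hymem
    have hrot := hd.rotate hymem
    apply key y (d.rotate y hymem) hrot
    intro z hz
    apply hymax
    rw [List.mem_toFinset]
    have hperm := SimpleGraph.Walk.support_rotate d y hymem
    rw [SimpleGraph.Walk.mem_support_iff] at hz
    rcases hz with rfl | hz
    · exact hymem
    · exact List.mem_of_mem_tail (hperm.perm.subset hz)
  -- neighbourhood cardinalities
  have hncard : ∀ u, u ∈ s →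
      (H.neighborSet u).ncard =
        (if lev u = h then 0 else if u = v then Δ else Δ - 1) + (if u = v then 0 else 1) := by
    intro u hu
    have hset : H.neighborSet u =
        ↑((s.filter (fun z => z ≠ v ∧ par z = u)) ∪ (if u = v then ∅ else {par u})) := by
      apply Set.ext
      intro w
      rw [SimpleGraph.Subgraph.mem_neighborSet]
      constructor
      · intro hw'
        rw [Finset.mem_coe, Finset.mem_union]
        rcases hw'.2.2 with ⟨hne, hpar⟩ | ⟨hne, hpar⟩
        · right
          rw [if_neg hne, Finset.mem_singleton, ← hpar]
        · left
          rw [Finset.mem_filter]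
          exact ⟨hw'.2.1, hne, hpar⟩
      · intro hw
        rw [Finset.mem_coe, Finset.mem_union] at hw
        rcases hw with hw | hw
        · rw [Finset.mem_filter] at hw
          exact ⟨hu, hw.1, Or.inr hw.2⟩
        · by_cases huv : u = v
          · rw [if_pos huv] at hw
            simp at hw
          · rw [if_neg huv, Finset.mem_singleton] at hw
            obtain ⟨hq1, _, _⟩ := hP3 u hu huv
            subst hw
            exact ⟨hu, hq1, Or.inl ⟨huv, rfl⟩⟩
    rw [hset, Set.ncard_coe_finset]
    by_cases huv : u = v
    · simp only [if_pos huv, Finset.union_empty, add_zero, hP4 u hu]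
    · simp only [if_neg huv]
      obtain ⟨hq1, _, hq3⟩ := hP3 u hu huv
      have hdisj : Disjoint (s.filter (fun z => z ≠ v ∧ par z = u)) ({par u} : Finset V) := by
        rw [Finset.disjoint_singleton_right, Finset.mem_filter]
        rintro ⟨hmem1, hne1, hpar1⟩
        obtain ⟨_, _, h3'⟩ := hP3 (par u) hq1 hne1
        rw [hpar1] at h3'
        omega
      rw [Finset.card_union_of_disjoint hdisj, Finset.card_singleton, hP4 u hu]
      simp only [if_neg huv]
  -- conclusion
  have hconn : H.coe.Connected := by
    rw [SimpleGraph.connected_iff]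
    exact ⟨hpre, ⟨⟨v, hvmem⟩⟩⟩
  refine ⟨H, hvmem, ⟨hconn, hacyc⟩, ?_⟩
  intro u hu
  have hus : u ∈ s := Finset.mem_coe.1 hu
  by_cases hlevu : lev u = h
  · right
    have huv : u ≠ v := by
      intro he
      rw [he, hlv] at hlevu
      omega
    refine ⟨?_, hleaf u hus hlevu, ?_⟩
    · rw [hncard u hus, if_pos hlevu, if_neg huv]
    · rw [hdist ⟨u, hu⟩]
      exact hlevu
  · left
    rw [hncard u hus, if_neg hlevu]
    by_cases huv : u = v
    · rw [if_pos huv, if_pos huv]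
      omega
    · rw [if_neg huv, if_neg huv]
      omega

lemma tsize_le (Δ : ℕ) : ∀ t b, b ≤ Δ + 1 → tsize Δ t b ≤ (Δ+2)^(t+1) := by
  intro t
  induction t with
  | zero =>
    intro b _
    rw [tsize_zero, pow_one]
    omega
  | succ t iht =>
    intro b hb
    rw [tsize_succ]
    have h1 := iht (Δ-1) (by omega)
    have h2 : b * tsize Δ t (Δ-1) ≤ (Δ+1) * (Δ+2)^(t+1) := Nat.mul_le_mul hb h1
    have h3 : 1 ≤ (Δ+2)^(t+1) := Nat.one_le_pow _ _ (by omega)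
    have h4 : (Δ+2)^(t+1+1) = (Δ+2)^(t+1) + (Δ+1) * (Δ+2)^(t+1) := by ring
    omega

lemma pow_small (q : ℝ) (hq : 0 < q) (hq1 : q ≤ 1) :
    (1 - 3*q/4) ^ (⌈(16:ℝ)/(3*q^2)⌉₊ + 1) ≤ q/4 := by
  set x : ℝ := 3*q/4 with hxdef
  set k : ℕ := ⌈(16:ℝ)/(3*q^2)⌉₊ + 1 with hkdef
  have hx0 : 0 < x := by rw [hxdef]; linarith
  have hx1 : x ≤ 3/4 := by rw [hxdef]; linarith
  have h1x : (0:ℝ) ≤ 1 - x := by linarith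
  have hprod : (1-x)^k * (1+x)^k ≤ 1 := by
    rw [← mul_pow]
    apply pow_le_one₀
    · nlinarith
    · nlinarith
  have hbern : 1 + (k:ℝ)*x ≤ (1+x)^k := one_add_mul_le_pow (by linarith) k
  have hkbig : 4/q ≤ 1 + (k:ℝ)*x := by
    have hceil : (16:ℝ)/(3*q^2) ≤ (⌈(16:ℝ)/(3*q^2)⌉₊ : ℝ) := Nat.le_ceil _
    have hk' : (16:ℝ)/(3*q^2) ≤ (k:ℝ) := by
      rw [hkdef]
      push_cast
      linarith
    have hq2 : 0 < q^2 := by positivity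
    have : (16/(3*q^2)) * x ≤ (k:ℝ)*x := mul_le_mul_of_nonneg_right hk' hx0.le
    have heq : (16/(3*q^2)) * x = 4/q := by
      rw [hxdef]
      field_simp
      ring
    rw [heq] at this
    linarith
  have hnn : (0:ℝ) ≤ (1-x)^k := pow_nonneg h1x k
  have hchain : (1-x)^k * (4/q) ≤ 1 := by
    calc (1-x)^k * (4/q) ≤ (1-x)^k * (1 + (k:ℝ)*x) := mul_le_mul_of_nonneg_left hkbig hnn
      _ ≤ (1-x)^k * (1+x)^k := mul_le_mul_of_nonneg_left hbern hnn
      _ ≤ 1 := hprod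
  have h4q : 0 < 4/q := by positivity
  calc (1-x)^k = ((1-x)^k * (4/q)) * (q/4) := by field_simp
    _ ≤ 1 * (q/4) := by
        apply mul_le_mul_of_nonneg_right hchain
        positivity
    _ = q/4 := one_mul _

end Stmt18

set_option maxHeartbeats 2000000 in
/-- Let `Δ⁻¹, q ≫ L⁻¹ ≫ n⁻¹`. Let `G` be a `q`-cut-dense graph on `n`
vertices, `v ∈ V(G)`, and `U ⊆ V(G)` with `|U| ≥ L`. Then there is a perfect `Δ`-ary
tree of height `h ≤ 19·q⁻⁴` rooted at `v` embedded in `G` (a subgraph which is a tree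
containing `v`, every vertex of which either has degree `Δ` or is a leaf lying in `U` at
distance exactly `h` from `v`). -/
theorem stmt18 (Δ : ℕ) (hΔ : 1 ≤ Δ) (q : ℝ) (hq : 0 < q) :
    ∃ L₀ : ℕ, ∀ L : ℕ, L₀ ≤ L → ∃ n₀ : ℕ,
      ∀ (V : Type) [Fintype V], n₀ ≤ Fintype.card V →
        ∀ (G : SimpleGraph V), CutDense G q →
          ∀ (v : V) (U : Set V), L ≤ U.ncard →
            ∃ (H : G.Subgraph) (hv : v ∈ H.verts) (h : ℕ),
              H.coe.IsTree ∧ (h : ℝ) ≤ 19 / q ^ 4 ∧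
              ∀ u : V, ∀ hu : u ∈ H.verts,
                (H.neighborSet u).ncard = Δ ∨
                ((H.neighborSet u).ncard ≤ 1 ∧ u ∈ U ∧
                  H.coe.dist ⟨v, hv⟩ ⟨u, hu⟩ = h) := by
  classical
  open Stmt18 in
  obtain ⟨m, hmdef⟩ : ∃ m : ℕ, m = ⌈(16:ℝ)/(3*q^2)⌉₊ + 1 := ⟨_, rfl⟩
  obtain ⟨Hb, hHbdef⟩ : ∃ Hb : ℕ, Hb = m + 2 := ⟨_, rfl⟩
  obtain ⟨D, hDdef⟩ : ∃ D : ℕ, D = (Δ+2)^(Hb+2) := ⟨_, rfl⟩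
  have hD1 : 1 ≤ D := by rw [hDdef]; exact Nat.one_le_pow _ _ (by omega)
  refine ⟨⌈(16:ℝ)*D/q^2⌉₊ + 1, ?_⟩
  intro L hL
  refine ⟨⌈(8:ℝ)*(2*D+1)/q⌉₊ + 8*L + 2, ?_⟩
  intro V _ hn G hG v U hU
  letI : DecidableEq V := Classical.decEq V
  letI : DecidableRel G.Adj := Classical.decRel _
  set n : ℕ := Fintype.card V with hndef
  -- basic numeric facts
  have hL1 : 1 ≤ L := by omega
  have hLreal : (16:ℝ)*D/q^2 ≤ (L:ℝ) := by
    have h1 : (16:ℝ)*D/q^2 ≤ (⌈(16:ℝ)*D/q^2⌉₊ : ℝ) := Nat.le_ceil _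
    have h2 : (⌈(16:ℝ)*D/q^2⌉₊ : ℝ) ≤ (L:ℝ) := by exact_mod_cast (by omega : ⌈(16:ℝ)*D/q^2⌉₊ ≤ L)
    linarith
  have hn2 : 2 ≤ n := by omega
  have hn8L : 8*L ≤ n := by omega
  have hnreal : (8:ℝ)*(2*D+1)/q ≤ (n:ℝ) := by
    have h1 : (8:ℝ)*(2*D+1)/q ≤ (⌈(8:ℝ)*(2*D+1)/q⌉₊ : ℝ) := Nat.le_ceil _
    have h2 : (⌈(8:ℝ)*(2*D+1)/q⌉₊ : ℝ) ≤ (n:ℝ) := by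
      exact_mod_cast (by omega : ⌈(8:ℝ)*(2*D+1)/q⌉₊ ≤ n)
    linarith
  have hq1 : q ≤ 1 := q_le_one hG hq hn2
  have hn0 : (0:ℝ) < (n:ℝ) := by exact_mod_cast (by omega : 0 < n)
  -- choose U₁ ⊆ U with |U₁| = L
  have hUt : L ≤ U.toFinset.card := by
    rwa [Set.ncard_eq_toFinset_card' U] at hU
  obtain ⟨U₁, hU₁sub, hU₁card⟩ := Finset.exists_subset_card_eq hUt
  have hU₁U : ∀ x ∈ U₁, x ∈ U := by
    intro x hx
    exact Set.mem_toFinset.1 (hU₁sub hx)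
  have hU₁compl : U₁ᶜ.card = n - L := by
    rw [Finset.card_compl, hU₁card]
  have hLn : L ≤ n := by omega
  -- cut-density on (U₁, U₁ᶜ)
  have hcd := cutdense_finset hG U₁
  rw [hU₁card, hU₁compl] at hcd
  -- extract the bipartite D-core
  obtain ⟨A', B', hA'sub, hB'sub, hA'deg, hB'deg, hepcore⟩ :=
    core (G := G) D (U₁.card + U₁ᶜ.card) U₁ U₁ᶜ le_rfl
  rw [hU₁card, hU₁compl] at hepcore
  -- lower bound on |A'|
  have hq2L : (16:ℝ)*D ≤ q^2 * L := by
    have : (16:ℝ)*D/q^2 * q^2 ≤ (L:ℝ) * q^2 :=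
      mul_le_mul_of_nonneg_right hLreal (by positivity)
    rw [div_mul_cancel₀] at this
    · linarith
    · positivity
  have hDqL : (D:ℝ) ≤ q*L/16 := by
    have hql : (0:ℝ) ≤ q*L*(1-q) :=
      mul_nonneg (mul_nonneg hq.le (Nat.cast_nonneg L)) (by linarith)
    nlinarith [hq2L]
  have hA'large : q*L/2 ≤ (A'.card : ℝ) := by
    have h1 : (ep G U₁ U₁ᶜ : ℝ) ≤ (ep G A' B' : ℝ) + D * ((L:ℝ) + ((n - L : ℕ) : ℝ)) := by
      exact_mod_cast hepcore
    have h2 : (ep G A' B' : ℝ) ≤ (n:ℝ) * A'.card := by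
      have hb : (B'.card : ℝ) ≤ (n:ℝ) := by exact_mod_cast Finset.card_le_univ B'
      have := ep_le_mul (G := G) A' B'
      have h3 : (ep G A' B' : ℝ) ≤ (B'.card : ℝ) * A'.card := by exact_mod_cast this
      have h4 : (0:ℝ) ≤ (A'.card : ℝ) := by positivity
      nlinarith
    have hsub : ((n - L : ℕ) : ℝ) = (n:ℝ) - L := by
      push_cast [Nat.cast_sub hLn]
      ring
    rw [hsub] at h1 hcd
    have hL8 : (8:ℝ)*L ≤ (n:ℝ) := by exact_mod_cast hn8L
    have hL0 : (1:ℝ) ≤ (L:ℝ) := by exact_mod_cast hL1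
    -- q*L*(n-L) ≤ n*|A'| + D*n, n-L ≥ 7n/8 : |A'| ≥ 7qL/8 - D ≥ qL/2
    have hkey : q*L*((n:ℝ)-L) ≤ (n:ℝ)*A'.card + D*(n:ℝ) := by linarith
    have h78 : q*L*(7*(n:ℝ)/8) ≤ q*L*((n:ℝ)-L) := by nlinarith [mul_nonneg hq.le (le_trans zero_le_one hL0)]
    have h9 : (n:ℝ) * (7*q*(L:ℝ)/8 - D) ≤ (n:ℝ) * (A'.card : ℝ) := by
      have hexp : (n:ℝ) * (7*q*(L:ℝ)/8 - (D:ℝ)) = q*(L:ℝ)*(7*(n:ℝ)/8) - (D:ℝ)*(n:ℝ) := by ring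
      rw [hexp]
      linarith [hkey, h78]
    have h10 : 7*q*(L:ℝ)/8 - D ≤ (A'.card : ℝ) := le_of_mul_le_mul_left h9 hn0
    linarith [hDqL]
  have hA'L : (0:ℝ) < (A'.card : ℝ) := by
    have hqL : (0:ℝ) < q*(L:ℝ) := mul_pos hq (by exact_mod_cast hL1)
    linarith [hA'large]
  have hA'ne : A'.Nonempty := Finset.card_pos.1 (by exact_mod_cast hA'L)
  -- the chain of sets
  set Y : ℕ → Finset V :=
    fun j => Nat.rec A' (fun _ prev => Finset.univ.filter (fun x => D ≤ degIn G x prev)) j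
    with hYdef
  have hY0 : Y 0 = A' := rfl
  have hYmem : ∀ j x, x ∈ Y (j+1) ↔ D ≤ degIn G x (Y j) := by
    intro j x
    constructor
    · intro hx
      exact (Finset.mem_filter.1 hx).2
    · intro hx
      exact Finset.mem_filter.2 ⟨Finset.mem_univ x, hx⟩
  have HY : ∀ j x, x ∈ Y (j+1) → D ≤ degIn G x (Y j) := fun j x hx => (hYmem j x).1 hx
  have hB'Y1 : B' ⊆ Y 1 := by
    intro b hb
    exact (hYmem 0 b).2 (hB'deg b hb)
  have hmono : ∀ j, Y j ⊆ Y (j+2) := by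
    intro j
    induction j with
    | zero =>
      intro a ha
      apply (hYmem 1 a).2
      calc D ≤ degIn G a B' := hA'deg a ha
        _ ≤ degIn G a (Y 1) := degIn_mono hB'Y1 a
    | succ j ihj =>
      intro x hx
      apply (hYmem (j+2) x).2
      calc D ≤ degIn G x (Y j) := HY j x hx
        _ ≤ degIn G x (Y (j+2)) := degIn_mono ihj x
  -- the monotone union chain
  set P : ℕ → Finset V := fun j => Y j ∪ Y (j+1) with hPdef
  have hPmono : ∀ j, P j ⊆ P (j+1) := by
    intro j
    apply Finset.union_subset
    · exact Finset.Subset.trans (hmono j) Finset.subset_union_right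
    · exact Finset.subset_union_left
  have hPA' : ∀ j, A' ⊆ P j := by
    intro j
    induction j with
    | zero => exact Finset.subset_union_left
    | succ j ihj => exact Finset.Subset.trans ihj (hPmono j)
  have hPcard : ∀ j, q*L/2 ≤ ((P j).card : ℝ) := by
    intro j
    calc q*L/2 ≤ (A'.card : ℝ) := hA'large
      _ ≤ ((P j).card : ℝ) := by exact_mod_cast Finset.card_le_card (hPA' j)
  -- one shrinking step
  have hshrinkstep : ∀ j, (((P (j+1))ᶜ.card : ℝ)) ≤ (1 - 3*q/4) * ((P j)ᶜ.card : ℝ) := by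
    intro j
    have hsub : (P (j+1))ᶜ ⊆ (P j)ᶜ.filter (fun y => degIn G y (P j) < 2*D) := by
      intro x hx
      rw [Finset.mem_compl] at hx
      have hx1 : x ∉ Y (j+1) := fun hc => hx (Finset.mem_union_left _ hc)
      have hx2 : x ∉ Y (j+2) := fun hc => hx (Finset.mem_union_right _ hc)
      rw [Finset.mem_filter, Finset.mem_compl]
      constructor
      · intro hc
        rw [hPdef] at hc
        rcases Finset.mem_union.1 hc with hc | hc
        · exact hx2 (hmono j hc)
        · exact hx1 hc
      · by_contra hdeg
        push_neg at hdeg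
        have hsplit : degIn G x (P j) ≤ degIn G x (Y j) + degIn G x (Y (j+1)) :=
          degIn_union_le x _ _
        have : D ≤ degIn G x (Y j) ∨ D ≤ degIn G x (Y (j+1)) := by omega
        rcases this with hc | hc
        · exact hx1 ((hYmem j x).2 hc)
        · exact hx2 ((hYmem (j+1) x).2 hc)
    have hthresh : ((2*D : ℕ) : ℝ) ≤ q * ((P j).card : ℝ) / 4 := by
      have := hPcard j
      push_cast
      nlinarith
    have hPne : (P j).Nonempty := by
      obtain ⟨a, ha⟩ := hA'ne
      exact ⟨a, hPA' j ha⟩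
    have hsh := shrink hG hq hq1 (P j) hPne (2*D) hthresh
    calc (((P (j+1))ᶜ.card : ℝ)) ≤ (((P j)ᶜ.filter (fun y => degIn G y (P j) < 2*D)).card : ℝ) := by
          exact_mod_cast Finset.card_le_card hsub
      _ ≤ (1 - 3*q/4) * ((P j)ᶜ.card : ℝ) := hsh
  -- iterate the shrinking
  have hPiter : ∀ j, (((P j)ᶜ.card : ℝ)) ≤ (1 - 3*q/4)^j * (n:ℝ) := by
    intro j
    induction j with
    | zero =>
      rw [pow_zero, one_mul]
      exact_mod_cast Finset.card_le_univ _
    | succ j ihj =>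
      have h34 : (0:ℝ) ≤ 1 - 3*q/4 := by linarith
      calc (((P (j+1))ᶜ.card : ℝ)) ≤ (1 - 3*q/4) * ((P j)ᶜ.card : ℝ) := hshrinkstep j
        _ ≤ (1 - 3*q/4) * ((1 - 3*q/4)^j * (n:ℝ)) := mul_le_mul_of_nonneg_left ihj h34
        _ = (1 - 3*q/4)^(j+1) * (n:ℝ) := by ring
  -- the complement of `P m` is tiny
  have hPm : (((P m)ᶜ.card : ℝ)) ≤ q/4 * (n:ℝ) := by
    have hps := pow_small q hq hq1
    rw [← hmdef] at hps
    calc (((P m)ᶜ.card : ℝ)) ≤ (1 - 3*q/4)^m * (n:ℝ) := hPiter m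
      _ ≤ q/4 * (n:ℝ) := mul_le_mul_of_nonneg_right hps hn0.le
  -- hence v sees P m a lot
  have hvdeg : 2*D ≤ degIn G v (P m) := by
    have hmd := min_degree hG v
    have hcompl := deg_le_degIn_add_compl (G := G) v (P m)
    have hcompl' : ((G.neighborFinset v).card : ℝ) ≤ (degIn G v (P m) : ℝ) + ((P m)ᶜ.card : ℝ) := by
      exact_mod_cast hcompl
    have hqn : (8:ℝ)*(2*D+1) ≤ (n:ℝ)*q := by
      rw [div_le_iff₀ hq] at hnreal
      linarith
    have hbig : (2*D : ℝ) ≤ q*((n:ℝ)-1) - q/4*(n:ℝ) := by nlinarith [hqn]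
    have hfin : (2*D : ℝ) ≤ (degIn G v (P m) : ℝ) := by
      push_cast at hcompl' ⊢
      nlinarith [hmd, hcompl', hPm]
    exact_mod_cast hfin
  -- v lies in Y h for some small h ≥ 1
  obtain ⟨h, hh1, hhle, hvY⟩ : ∃ h, 1 ≤ h ∧ h ≤ m + 2 ∧ v ∈ Y h := by
    have hsplit : degIn G v (P m) ≤ degIn G v (Y m) + degIn G v (Y (m+1)) :=
      degIn_union_le v _ _
    have : D ≤ degIn G v (Y m) ∨ D ≤ degIn G v (Y (m+1)) := by omega
    rcases this with hc | hc
    · exact ⟨m+1, by omega, by omega, (hYmem m v).2 hc⟩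
    · exact ⟨m+2, by omega, by omega, (hYmem (m+1) v).2 hc⟩
  -- the tree size fits under D
  have htsize : tsize Δ h Δ ≤ D := by
    calc tsize Δ h Δ ≤ (Δ+2)^(h+1) := tsize_le Δ h Δ (by omega)
      _ ≤ (Δ+2)^(Hb+2) := Nat.pow_le_pow_right (by omega) (by omega)
      _ = D := hDdef.symm
  -- build the tree structure
  obtain ⟨s, par, lev, hvs, _hsF, _hcard, hlev0, hP6, hP3, hP4⟩ :=
    build (G := G) Y D Δ HY h Δ v ∅ hvY (by simpa using htsize) (Finset.notMem_empty v)
  -- leaves are in U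
  have hleaf : ∀ y ∈ s, lev y = h → y ∈ U := by
    intro y hy hl
    have h6 := (hP6 y hy).2
    rw [hl, Nat.sub_self, hY0] at h6
    exact hU₁U y (hA'sub h6)
  -- assemble the subgraph
  obtain ⟨H, hv', htree, hmain⟩ :=
    assemble (G := G) U v s par lev Δ h hΔ hh1 hvs hlev0 hP3 hP4 hleaf
  refine ⟨H, hv', h, htree, ?_, hmain⟩
  -- the height bound
  have hq4 : (0:ℝ) < q^4 := by positivity
  have hceil : (⌈(16:ℝ)/(3*q^2)⌉₊ : ℝ) < 16/(3*q^2) + 1 :=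
    Nat.ceil_lt_add_one (by positivity)
  have hhm : (h:ℝ) ≤ (m:ℝ) + 2 := by exact_mod_cast hhle
  have hmr : (m:ℝ) < 16/(3*q^2) + 2 := by
    rw [hmdef]
    push_cast
    linarith
  have hhr : (h:ℝ) < 16/(3*q^2) + 4 := by linarith
  rw [le_div_iff₀ hq4]
  have hq21 : q^2 ≤ 1 := by nlinarith
  have hq41 : q^4 ≤ 1 := by nlinarith
  have hq2pos : (0:ℝ) < q^2 := by positivity
  have hkey : (16/(3*q^2) + 4) * q^4 ≤ 19 := by
    have h1 : 16/(3*q^2) * q^4 = 16/3 * q^2 := by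
      field_simp
    rw [add_mul, h1]
    nlinarith
  nlinarith
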